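/- For all η ∈ ℝ, τ > 0, ξ ≠ 0 and positive integers β with βξ < 1/2, the function g_{β,η,τ,ξ} satisfies lim_{h → 0+} g_{β,η,τ,ξ}(h) = Σ_{k1=0}^{β} Σ_{k2=0}^{β} B_{k1,k2,β,η,τ,ξ} Γ(1 − ξ(2β − k1 − k2)) = g_{β,η,τ,ξ}(0), and g_{β,η,τ,ξ} is continuous on [0,∞). -/
import Mathlib


open MeasureTheory

noncomputable def nPdf (x : ℝ) : ℝ := Real.exp (-(x ^ 2) / 2) / Real.sqrt (2 * Real.pi)

noncomputable def nCdf (x : ℝ) : ℝ := ∫ t in Set.Iic x, nPdf t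

noncomputable def C1 (θ h : ℝ) : ℝ :=
  nCdf (h / 2 + Real.log θ / h) + (1 / θ) * nCdf (h / 2 - Real.log θ / h)

noncomputable def C2 (θ h : ℝ) : ℝ :=
  (nCdf (h / 2 + Real.log θ / h) + (1 / h) * nPdf (h / 2 + Real.log θ / h)
      - (1 / (h * θ)) * nPdf (h / 2 - Real.log θ / h))
    * ((1 / θ ^ 2) * nCdf (h / 2 - Real.log θ / h)
      + (1 / (h * θ ^ 2)) * nPdf (h / 2 - Real.log θ / h)
      - (1 / (h * θ)) * nPdf (h / 2 + Real.log θ / h))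

noncomputable def C3 (θ h : ℝ) : ℝ :=
  (1 / (h ^ 2 * θ)) * (h / 2 - Real.log θ / h) * nPdf (h / 2 + Real.log θ / h)
    + (1 / (h ^ 2 * θ ^ 2)) * (h / 2 + Real.log θ / h) * nPdf (h / 2 - Real.log θ / h)

noncomputable def gs (β1 β2 h : ℝ) : ℝ :=
  if h = 0 then Real.Gamma (1 - β1 - β2)
  else ∫ θ in Set.Ioi (0 : ℝ),
    θ ^ β2 * (C2 θ h * C1 θ h ^ (β1 + β2 - 2) * Real.Gamma (2 - β1 - β2)
      + C3 θ h * C1 θ h ^ (β1 + β2 - 1) * Real.Gamma (1 - β1 - β2))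

noncomputable def Bcoef (β k1 k2 : ℕ) (η τ ξ : ℝ) : ℝ :=
  (β.choose k1 : ℝ) * (β.choose k2 : ℝ) * (η - τ / ξ) ^ (k1 + k2) * (τ / ξ) ^ (2 * β - (k1 + k2))

noncomputable def gfull (β : ℕ) (η τ ξ : ℝ) (h : ℝ) : ℝ :=
  ∑ k1 ∈ Finset.range (β + 1), ∑ k2 ∈ Finset.range (β + 1),
    Bcoef β k1 k2 η τ ξ * gs (((β : ℝ) - k1) * ξ) (((β : ℝ) - k2) * ξ) h

lemma nPdf_pos (x : ℝ) : 0 < nPdf x :=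
  div_pos (Real.exp_pos _) (Real.sqrt_pos.2 (by positivity))

lemma nPdf_nonneg (x : ℝ) : 0 ≤ nPdf x := (nPdf_pos x).le

lemma continuous_nPdf : Continuous nPdf := by
  unfold nPdf; fun_prop

lemma integrable_nPdf : Integrable nPdf := by
  have h : Integrable (fun x : ℝ => Real.exp (-(1/2 : ℝ) * x ^ 2)) :=
    integrable_exp_neg_mul_sq (by norm_num)
  have := h.div_const (Real.sqrt (2 * Real.pi))
  refine this.congr (by filter_upwards with x; unfold nPdf; ring_nf)

lemma integral_nPdf : ∫ x, nPdf x = 1 := by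
  have h := integral_gaussian (1/2 : ℝ)
  have h2 : ∫ x : ℝ, Real.exp (-(x ^ 2) / 2) = Real.sqrt (2 * Real.pi) := by
    rw [show (Real.sqrt (2 * Real.pi)) = Real.sqrt (Real.pi / (1/2)) by norm_num [mul_comm]]
    rw [← h]; congr 1 with x; ring_nf
  rw [show nPdf = fun x => Real.exp (-(x ^ 2) / 2) / Real.sqrt (2 * Real.pi) from rfl]
  rw [integral_div, h2, div_self (by positivity)]

lemma nPdf_shift (l x : ℝ) : nPdf x * Real.exp (-(l * x)) = Real.exp (l ^ 2 / 2) * nPdf (x + l) := by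
  unfold nPdf
  rw [div_mul_eq_mul_div, ← Real.exp_add, ← mul_div_assoc, ← Real.exp_add]
  congr 2; ring

lemma integrable_nPdf_exp (l : ℝ) : Integrable (fun x => nPdf x * Real.exp (-(l * x))) := by
  have : Integrable (fun x : ℝ => Real.exp (l ^ 2 / 2) * nPdf (x + l)) :=
    ((integrable_nPdf.comp_add_right l)).const_mul _
  exact this.congr (by filter_upwards with x; rw [nPdf_shift])

lemma integral_nPdf_exp (l : ℝ) : ∫ x, nPdf x * Real.exp (-(l * x)) = Real.exp (l ^ 2 / 2) := by
  simp_rw [nPdf_shift l]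
  rw [integral_const_mul]
  have : ∫ x, nPdf (x + l) = ∫ x, nPdf x := integral_add_right_eq_self _ _
  rw [this, integral_nPdf, mul_one]

lemma nCdf_nonneg (x : ℝ) : 0 ≤ nCdf x :=
  setIntegral_nonneg measurableSet_Iic fun t _ => nPdf_nonneg t

lemma nCdf_le_one (x : ℝ) : nCdf x ≤ 1 := by
  rw [← integral_nPdf]
  exact setIntegral_le_integral integrable_nPdf (by filter_upwards with t using nPdf_nonneg t)

lemma nCdf_pos (x : ℝ) : 0 < nCdf x := by
  rw [nCdf, MeasureTheory.setIntegral_pos_iff_support_of_nonneg_ae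
    (by filter_upwards with t using nPdf_nonneg t) (integrable_nPdf.integrableOn)]
  have : Function.support nPdf = Set.univ := by
    ext t; simp [Function.mem_support, (nPdf_pos t).ne']
  rw [this, Set.univ_inter]
  simp [Real.volume_Iic]

lemma nCdf_mono : Monotone nCdf := fun x y hxy =>
  setIntegral_mono_set integrable_nPdf.integrableOn
    (by filter_upwards with t using nPdf_nonneg t)
    (HasSubset.Subset.eventuallyLE (Set.Iic_subset_Iic.2 hxy))

lemma nPdf_even (x : ℝ) : nPdf (-x) = nPdf x := by unfold nPdf; ring_nf

lemma nCdf_add_neg (x : ℝ) : nCdf x + nCdf (-x) = 1 := by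
  have h1 : nCdf (-x) = ∫ t in Set.Ioi x, nPdf t := by
    rw [nCdf, show (∫ t in Set.Iic (-x), nPdf t) = ∫ t in Set.Iic (-x), nPdf (-t) by
      congr 1 with t; rw [nPdf_even], integral_comp_neg_Iic, neg_neg]
  rw [h1, nCdf, ← integral_nPdf,
    ← intervalIntegral.integral_Iic_add_Ioi integrable_nPdf.integrableOn integrable_nPdf.integrableOn]

lemma nCdf_zero : nCdf 0 = 1/2 := by
  have := nCdf_add_neg 0
  rw [neg_zero] at this; linarith

lemma nCdf_half_le {y : ℝ} (hy : 0 ≤ y) : 1/2 ≤ nCdf y := nCdf_zero ▸ nCdf_mono hy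

lemma nCdf_le_exp {l : ℝ} (hl : 0 ≤ l) (y : ℝ) : nCdf y ≤ Real.exp (l * y + l ^ 2 / 2) := by
  have step1 : nCdf y ≤ ∫ t in Set.Iic y, nPdf t * Real.exp (l * y) * Real.exp (-(l * t)) := by
    rw [nCdf]
    refine setIntegral_mono_on integrable_nPdf.integrableOn
      (((integrable_nPdf_exp l).const_mul (Real.exp (l*y))).congr (by
        filter_upwards with t; ring)).integrableOn measurableSet_Iic fun t ht => ?_
    have h1 : (1:ℝ) ≤ Real.exp (l * y) * Real.exp (-(l * t)) := by
      rw [← Real.exp_add, ← Real.exp_zero]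
      exact Real.exp_le_exp.2 (by nlinarith [Set.mem_Iic.1 ht])
    nlinarith [nPdf_nonneg t, nPdf_pos t]
  have step2 : ∫ t in Set.Iic y, nPdf t * Real.exp (l * y) * Real.exp (-(l * t))
      ≤ ∫ t, nPdf t * Real.exp (l * y) * Real.exp (-(l * t)) := by
    refine setIntegral_le_integral (((integrable_nPdf_exp l).const_mul (Real.exp (l*y))).congr (by
      filter_upwards with t; ring)) (by
      filter_upwards with t
      have := nPdf_nonneg t
      positivity)
  calc nCdf y ≤ _ := step1
    _ ≤ _ := step2
    _ = Real.exp (l * y) * ∫ t, nPdf t * Real.exp (-(l * t)) := by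
        rw [← integral_const_mul]; congr 1 with t; ring
    _ = Real.exp (l * y + l ^ 2 / 2) := by rw [integral_nPdf_exp, ← Real.exp_add]

lemma continuous_nCdf : Continuous nCdf := by
  have h : ∀ x : ℝ, nCdf x = nCdf 0 + ∫ t in (0:ℝ)..x, nPdf t := by
    intro x
    rw [← intervalIntegral.integral_Iic_sub_Iic integrable_nPdf.integrableOn
      integrable_nPdf.integrableOn]
    unfold nCdf; ring
  rw [funext h]
  exact continuous_const.add (intervalIntegral.continuous_primitive
    (fun a b => integrable_nPdf.intervalIntegrable) 0)

lemma nPdf_flip (h x : ℝ) : nPdf (h/2 - x) = Real.exp (h*x) * nPdf (h/2 + x) := by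
  unfold nPdf
  rw [← mul_div_assoc, ← Real.exp_add]
  congr 2; ring

noncomputable def Cx (h x : ℝ) : ℝ := nCdf (h/2+x) + Real.exp (-(h*x)) * nCdf (h/2-x)

lemma Cx_pos (h x : ℝ) : 0 < Cx h x := by
  have := nCdf_pos (h/2+x); have := nCdf_pos (h/2-x); have := Real.exp_pos (-(h*x))
  unfold Cx; positivity

noncomputable def Jf (β1 β2 h x : ℝ) : ℝ := Real.Gamma (1-β1-β2) *
  (Real.exp (β2*(h*x)) * nPdf (h/2+x) * Cx h x ^ (β1+β2-1)
   + (1-β1-β2) * h * Real.exp ((β2-1)*(h*x)) * nCdf (h/2+x) * nCdf (h/2-x) * Cx h x ^ (β1+β2-2))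

lemma subst_eq (β1 β2 : ℝ) (hs : β1 + β2 ≠ 1) {h x : ℝ} (hh : 0 < h) :
    |h * Real.exp (h*x)| • ((Real.exp (h*x)) ^ β2 *
      (C2 (Real.exp (h*x)) h * C1 (Real.exp (h*x)) h ^ (β1 + β2 - 2) * Real.Gamma (2 - β1 - β2)
        + C3 (Real.exp (h*x)) h * C1 (Real.exp (h*x)) h ^ (β1 + β2 - 1)
          * Real.Gamma (1 - β1 - β2))) = Jf β1 β2 h x := by
  have hE : (0:ℝ) < Real.exp (h*x) := Real.exp_pos _
  have hlog : Real.log (Real.exp (h*x)) = h * x := Real.log_exp _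
  have hargp : h/2 + Real.log (Real.exp (h*x)) / h = h/2 + x := by
    rw [hlog, mul_div_cancel_left₀ _ hh.ne']
  have hargm : h/2 - Real.log (Real.exp (h*x)) / h = h/2 - x := by
    rw [hlog, mul_div_cancel_left₀ _ hh.ne']
  have hGamma : Real.Gamma (2 - β1 - β2) = (1 - β1 - β2) * Real.Gamma (1 - β1 - β2) := by
    rw [show (2:ℝ) - β1 - β2 = (1 - β1 - β2) + 1 by ring,
      Real.Gamma_add_one (by intro hc; apply hs; linarith)]
  have hC1 : C1 (Real.exp (h*x)) h = Cx h x := by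
    rw [C1, hargp, hargm, Cx, one_div, ← Real.exp_neg]
  have hrpow : (Real.exp (h*x)) ^ β2 = Real.exp (β2 * (h*x)) := by
    rw [Real.rpow_def_of_pos hE, hlog, mul_comm]
  have hEneg : Real.exp (-(h*x)) = (Real.exp (h*x))⁻¹ := Real.exp_neg _
  have hEsub : Real.exp ((β2-1)*(h*x)) = Real.exp (β2*(h*x)) / Real.exp (h*x) := by
    rw [show (β2-1)*(h*x) = β2*(h*x) - h*x by ring, Real.exp_sub]
  rw [smul_eq_mul, abs_of_pos (by positivity), C2, C3, hargp, hargm, hC1, hrpow, hGamma, Jf,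
    nPdf_flip, hEsub]
  field_simp
  ring

lemma gs_eq (β1 β2 : ℝ) (hs : β1 + β2 ≠ 1) {h : ℝ} (hh : 0 < h) :
    gs β1 β2 h = ∫ x, Jf β1 β2 h x := by
  rw [gs, if_neg hh.ne']
  have himg : Set.Ioi (0:ℝ) = (fun x : ℝ => Real.exp (h*x)) '' Set.univ := by
    rw [Set.image_univ]
    ext y
    simp only [Set.mem_Ioi, Set.mem_range]
    constructor
    · intro hy
      exact ⟨Real.log y / h, by rw [mul_div_cancel₀ _ hh.ne', Real.exp_log hy]⟩
    · rintro ⟨x, rfl⟩; exact Real.exp_pos _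
  have hd : ∀ x ∈ Set.univ, HasDerivWithinAt (fun x : ℝ => Real.exp (h*x))
      (h * Real.exp (h*x)) Set.univ x := by
    intro x _
    have h1 : HasDerivAt (fun x : ℝ => h * x) h x := by
      simpa using (hasDerivAt_id x).const_mul h
    have h2 := (Real.hasDerivAt_exp (h*x)).comp x h1
    rw [mul_comm] at h2
    exact h2.hasDerivWithinAt
  have hi : Set.InjOn (fun x : ℝ => Real.exp (h*x)) Set.univ := by
    have : Function.Injective (fun x : ℝ => Real.exp (h*x)) :=
      Real.exp_injective.comp (mul_right_injective₀ hh.ne')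
    exact this.injOn
  rw [himg, integral_image_eq_integral_abs_deriv_smul MeasurableSet.univ hd hi]
  rw [Measure.restrict_univ]
  congr 1 with x
  exact subst_eq β1 β2 hs hh

lemma nPdf_le_exp {b h x : ℝ} (hh : h ∈ Set.Ioc 0 b) :
    nPdf (h/2 + x) ≤ Real.exp (b*|x|/2 - x^2/2) := by
  obtain ⟨hh1, hh2⟩ := hh
  have h1 : nPdf (h/2+x) ≤ Real.exp (-((h/2+x) ^ 2) / 2) := by
    unfold nPdf
    refine div_le_self (Real.exp_nonneg _) ?_
    rw [show (1:ℝ) = Real.sqrt 1 by simp]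
    exact Real.sqrt_le_sqrt (by nlinarith [Real.pi_gt_three])
  refine h1.trans (Real.exp_le_exp.2 ?_)
  have h2 : h * (-x) ≤ h * |x| := mul_le_mul_of_nonneg_left (neg_le_abs x) hh1.le
  have h3 : h * |x| ≤ b * |x| := mul_le_mul_of_nonneg_right hh2 (abs_nonneg x)
  nlinarith [sq_nonneg h]

lemma two_rpow_eq (e : ℝ) : ((1:ℝ)/2) ^ e = (2:ℝ) ^ (-e) := by
  rw [one_div, Real.inv_rpow (by norm_num), ← Real.rpow_neg (by norm_num)]

lemma Cx_rpow_le_nonneg {h x e : ℝ} (hh : 0 < h) (hx : 0 ≤ x) (he : e ≤ 0) :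
    Cx h x ^ e ≤ (2:ℝ) ^ (-e) := by
  have h2 : (1/2 : ℝ) ≤ Cx h x := by
    have := nCdf_half_le (show (0:ℝ) ≤ h/2 + x by positivity)
    have := mul_nonneg (Real.exp_nonneg (-(h*x))) (nCdf_nonneg (h/2-x))
    unfold Cx; linarith
  calc Cx h x ^ e ≤ ((1:ℝ)/2) ^ e := Real.rpow_le_rpow_of_nonpos one_half_pos h2 he
    _ = (2:ℝ) ^ (-e) := two_rpow_eq e

lemma Cx_rpow_le_neg {h x e : ℝ} (hh : 0 < h) (hx : x < 0) (he : e ≤ 0) :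
    Cx h x ^ e ≤ Real.exp (e * (-(h*x))) * (2:ℝ) ^ (-e) := by
  have h2 : Real.exp (-(h*x)) * (1/2) ≤ Cx h x := by
    have hq := nCdf_half_le (show (0:ℝ) ≤ h/2 - x by nlinarith)
    have h3 : Real.exp (-(h*x)) * (1/2) ≤ Real.exp (-(h*x)) * nCdf (h/2-x) :=
      mul_le_mul_of_nonneg_left hq (Real.exp_nonneg _)
    have := nCdf_nonneg (h/2+x)
    unfold Cx; linarith
  calc Cx h x ^ e ≤ (Real.exp (-(h*x)) * (1/2)) ^ e :=
        Real.rpow_le_rpow_of_nonpos (by positivity) h2 he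
    _ = Real.exp (-(h*x)) ^ e * ((1:ℝ)/2) ^ e :=
        Real.mul_rpow (Real.exp_nonneg _) (by norm_num)
    _ = Real.exp (e * (-(h*x))) * (2:ℝ) ^ (-e) := by
        rw [two_rpow_eq, ← Real.exp_mul, mul_comm (-(h*x)) e]

lemma T1_bound (β1 β2 b : ℝ) (hb1 : β1 < 1/2) (hb2 : β2 < 1/2) (hb : 0 < b) {h x : ℝ}
    (hh : h ∈ Set.Ioc 0 b) :
    Real.exp (β2*(h*x)) * nPdf (h/2+x) * Cx h x ^ (β1+β2-1)
      ≤ (2:ℝ)^(1-(β1+β2)) * Real.exp (((|β1|+|β2|+2)*b + b/2)*|x| - x^2/2) := by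
  set m := |β1|+|β2|+2 with hm
  obtain ⟨hh1, hh2⟩ := hh
  have habs1 := abs_nonneg β1
  have habs2 := abs_nonneg β2
  have hβ2m : |β2| ≤ m := by rw [hm]; nlinarith
  have he : β1+β2-1 ≤ 0 := by linarith
  have hneg : (1:ℝ)-(β1+β2) = -(β1+β2-1) := by ring
  rcases le_or_gt 0 x with hx | hx
  · have hA : Real.exp (β2*(h*x)) ≤ Real.exp (m*b*|x|) := by
      apply Real.exp_le_exp.2
      calc β2*(h*x) ≤ |β2*(h*x)| := le_abs_self _
        _ = |β2| * (h*|x|) := by rw [abs_mul, abs_mul, abs_of_pos hh1]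
        _ ≤ m * (b*|x|) := mul_le_mul hβ2m
            (mul_le_mul_of_nonneg_right hh2 (abs_nonneg x))
            (by positivity) (by rw [hm]; positivity)
        _ = m*b*|x| := by ring
    have hB := nPdf_le_exp (b := b) (x := x) ⟨hh1, hh2⟩
    have hC : Cx h x ^ (β1+β2-1) ≤ (2:ℝ)^(1-(β1+β2)) := by
      rw [hneg]; exact Cx_rpow_le_nonneg hh1 hx he
    calc Real.exp (β2*(h*x)) * nPdf (h/2+x) * Cx h x ^ (β1+β2-1)
        ≤ Real.exp (m*b*|x|) * Real.exp (b*|x|/2 - x^2/2) * (2:ℝ)^(1-(β1+β2)) :=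
          mul_le_mul (mul_le_mul hA hB (nPdf_nonneg _) (Real.exp_nonneg _)) hC
            (Real.rpow_nonneg (Cx_pos h x).le _) (by positivity)
      _ = (2:ℝ)^(1-(β1+β2)) * Real.exp ((m*b + b/2)*|x| - x^2/2) := by
          rw [← Real.exp_add]; ring_nf
  · have hC : Cx h x ^ (β1+β2-1) ≤ Real.exp ((β1+β2-1) * (-(h*x))) * (2:ℝ)^(1-(β1+β2)) := by
      rw [hneg]; exact Cx_rpow_le_neg hh1 hx he
    calc Real.exp (β2*(h*x)) * nPdf (h/2+x) * Cx h x ^ (β1+β2-1)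
        ≤ Real.exp (β2*(h*x)) * nPdf (h/2+x) *
            (Real.exp ((β1+β2-1)*(-(h*x))) * (2:ℝ)^(1-(β1+β2))) :=
          mul_le_mul_of_nonneg_left hC (mul_nonneg (Real.exp_nonneg _) (nPdf_nonneg _))
      _ = (Real.exp (β2*(h*x)) * Real.exp ((β1+β2-1)*(-(h*x)))) * nPdf (h/2+x) *
            (2:ℝ)^(1-(β1+β2)) := by ring
      _ = Real.exp ((1-β1) * (h*x)) * nPdf (h/2+x) * (2:ℝ)^(1-(β1+β2)) := by
          rw [← Real.exp_add]; ring_nf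
      _ ≤ 1 * Real.exp (b*|x|/2 - x^2/2) * (2:ℝ)^(1-(β1+β2)) :=
          mul_le_mul (mul_le_mul (Real.exp_le_one_iff.2 (by
              nlinarith [mul_nonneg (show (0:ℝ) ≤ 1-β1 by linarith)
                (show (0:ℝ) ≤ -(h*x) by nlinarith [mul_pos hh1 (neg_pos.2 hx)])]))
              (nPdf_le_exp ⟨hh1, hh2⟩) (nPdf_nonneg _) zero_le_one)
            le_rfl (Real.rpow_nonneg (by norm_num) _) (by positivity)
      _ ≤ (2:ℝ)^(1-(β1+β2)) * Real.exp ((m*b + b/2)*|x| - x^2/2) := by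
          rw [one_mul, mul_comm]
          refine mul_le_mul_of_nonneg_left (Real.exp_le_exp.2 ?_)
            (Real.rpow_nonneg (by norm_num) _)
          have hm0 : (0:ℝ) ≤ m := by rw [hm]; positivity
          nlinarith [mul_nonneg (mul_nonneg hm0 hb.le) (abs_nonneg x)]

lemma T2_bound (β1 β2 b : ℝ) (hb1 : β1 < 1/2) (hb2 : β2 < 1/2) (hb : 0 < b) {h x : ℝ}
    (hh : h ∈ Set.Ioc 0 b) :
    (1-β1-β2) * h * Real.exp ((β2-1)*(h*x)) * nCdf (h/2+x) * nCdf (h/2-x)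
        * Cx h x ^ (β1+β2-2)
      ≤ (1-β1-β2) * b * ((2:ℝ)^(2-(β1+β2)) *
          (Real.exp (((|β1|+|β2|+2)*b+1)*(b/2) + ((|β1|+|β2|+2)*b+1)^2/2) *
            Real.exp (-|x|))) := by
  set m := |β1|+|β2|+2 with hm
  set lam := m*b+1 with hlam
  obtain ⟨hh1, hh2⟩ := hh
  have habs1 := abs_nonneg β1
  have habs2 := abs_nonneg β2
  have hm0 : (0:ℝ) ≤ m := by rw [hm]; positivity
  have hlam1 : (1:ℝ) ≤ lam := by rw [hlam]; nlinarith
  have hlam0 : (0:ℝ) ≤ lam := by linarith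
  have hs1 : (0:ℝ) < 1-β1-β2 := by linarith
  have he2 : β1+β2-2 ≤ 0 := by linarith
  have hneg2 : (2:ℝ)-(β1+β2) = -(β1+β2-2) := by ring
  have hP0 : (0:ℝ) ≤ nCdf (h/2+x) := nCdf_nonneg _
  have hQ0 : (0:ℝ) ≤ nCdf (h/2-x) := nCdf_nonneg _
  have hR0 : (0:ℝ) ≤ Cx h x ^ (β1+β2-2) := (Real.rpow_nonneg (Cx_pos h x).le _)
  have hE0 : (0:ℝ) ≤ Real.exp ((β2-1)*(h*x)) := Real.exp_nonneg _
  have h2pow : (0:ℝ) ≤ (2:ℝ)^(2-(β1+β2)) := Real.rpow_nonneg (by norm_num) _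
  rcases le_or_gt 0 x with hx | hx
  · have h1 : Real.exp ((β2-1)*(h*x)) * nCdf (h/2+x) ≤ 1 := by
      calc Real.exp ((β2-1)*(h*x)) * nCdf (h/2+x) ≤ 1 * 1 :=
            mul_le_mul (Real.exp_le_one_iff.2 (by nlinarith [mul_nonneg hh1.le hx]))
              (nCdf_le_one _) hP0 zero_le_one
        _ = 1 := by ring
    have h2 : nCdf (h/2-x) ≤ Real.exp (lam*(b/2) + lam^2/2) * Real.exp (-|x|) := by
      rw [← Real.exp_add]
      refine (nCdf_le_exp hlam0 _).trans (Real.exp_le_exp.2 ?_)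
      have hax : |x| = x := abs_of_nonneg hx
      nlinarith [mul_le_mul_of_nonneg_left hh2 hlam0,
        mul_nonneg (show (0:ℝ) ≤ lam - 1 by linarith) hx]
    have h3 : Cx h x ^ (β1+β2-2) ≤ (2:ℝ)^(2-(β1+β2)) := by
      rw [hneg2]; exact Cx_rpow_le_nonneg hh1 hx he2
    calc (1-β1-β2) * h * Real.exp ((β2-1)*(h*x)) * nCdf (h/2+x) * nCdf (h/2-x)
          * Cx h x ^ (β1+β2-2)
        = ((1-β1-β2) * h) * ((Real.exp ((β2-1)*(h*x)) * nCdf (h/2+x)) *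
            (nCdf (h/2-x) * Cx h x ^ (β1+β2-2))) := by ring
      _ ≤ ((1-β1-β2) * b) * (1 * ((Real.exp (lam*(b/2) + lam^2/2) * Real.exp (-|x|)) *
            (2:ℝ)^(2-(β1+β2)))) := by
          refine mul_le_mul (mul_le_mul_of_nonneg_left hh2 hs1.le)
            (mul_le_mul h1 (mul_le_mul h2 h3 hR0 (by positivity)) (mul_nonneg hQ0 hR0)
              zero_le_one)
            (mul_nonneg (mul_nonneg hE0 hP0) (mul_nonneg hQ0 hR0))
            (by positivity)
      _ = (1-β1-β2) * b * ((2:ℝ)^(2-(β1+β2)) *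
            (Real.exp (lam*(b/2) + lam^2/2) * Real.exp (-|x|))) := by ring
  · have h3 : Cx h x ^ (β1+β2-2) ≤ Real.exp ((β1+β2-2)*(-(h*x))) * (2:ℝ)^(2-(β1+β2)) := by
      rw [hneg2]; exact Cx_rpow_le_neg hh1 hx he2
    have hcombo : Real.exp ((β2-1)*(h*x)) * Real.exp ((β1+β2-2)*(-(h*x)))
        = Real.exp ((1-β1)*(h*x)) := by rw [← Real.exp_add]; ring_nf
    have hone : Real.exp ((1-β1)*(h*x)) ≤ 1 :=
      Real.exp_le_one_iff.2 (by
        nlinarith [mul_nonneg (show (0:ℝ) ≤ 1-β1 by linarith)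
          (show (0:ℝ) ≤ -(h*x) by nlinarith [mul_pos hh1 (neg_pos.2 hx)])])
    have hP : nCdf (h/2+x) ≤ Real.exp (lam*(b/2) + lam^2/2) * Real.exp (-|x|) := by
      rw [← Real.exp_add]
      refine (nCdf_le_exp hlam0 _).trans (Real.exp_le_exp.2 ?_)
      have hax : |x| = -x := abs_of_neg hx
      nlinarith [mul_le_mul_of_nonneg_left hh2 hlam0,
        mul_nonneg (show (0:ℝ) ≤ lam - 1 by linarith) (show (0:ℝ) ≤ -x by linarith)]
    calc (1-β1-β2) * h * Real.exp ((β2-1)*(h*x)) * nCdf (h/2+x) * nCdf (h/2-x)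
          * Cx h x ^ (β1+β2-2)
        = ((1-β1-β2) * h) * ((Real.exp ((β2-1)*(h*x)) * nCdf (h/2+x)) *
            (nCdf (h/2-x) * Cx h x ^ (β1+β2-2))) := by ring
      _ ≤ ((1-β1-β2) * h) * ((Real.exp ((β2-1)*(h*x)) * nCdf (h/2+x)) *
            (nCdf (h/2-x) * (Real.exp ((β1+β2-2)*(-(h*x))) * (2:ℝ)^(2-(β1+β2))))) := by
          refine mul_le_mul_of_nonneg_left (mul_le_mul_of_nonneg_left
            (mul_le_mul_of_nonneg_left h3 hQ0) (mul_nonneg hE0 hP0)) (by positivity)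
      _ = ((1-β1-β2) * h) * ((Real.exp ((β2-1)*(h*x)) * Real.exp ((β1+β2-2)*(-(h*x)))) *
            (nCdf (h/2+x) * nCdf (h/2-x) * (2:ℝ)^(2-(β1+β2)))) := by ring
      _ = ((1-β1-β2) * h) * (Real.exp ((1-β1)*(h*x)) *
            (nCdf (h/2+x) * nCdf (h/2-x) * (2:ℝ)^(2-(β1+β2)))) := by rw [hcombo]
      _ ≤ ((1-β1-β2) * b) * (1 *
            ((Real.exp (lam*(b/2) + lam^2/2) * Real.exp (-|x|)) * 1 * (2:ℝ)^(2-(β1+β2)))) := by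
          refine mul_le_mul (mul_le_mul_of_nonneg_left hh2 hs1.le)
            (mul_le_mul hone (mul_le_mul (mul_le_mul hP (nCdf_le_one _) hQ0 (by positivity))
                le_rfl h2pow (by positivity))
              (mul_nonneg (mul_nonneg hP0 hQ0) h2pow) zero_le_one)
            (mul_nonneg (Real.exp_nonneg _) (mul_nonneg (mul_nonneg hP0 hQ0) h2pow))
            (by positivity)
      _ = (1-β1-β2) * b * ((2:ℝ)^(2-(β1+β2)) *
            (Real.exp (lam*(b/2) + lam^2/2) * Real.exp (-|x|))) := by ring

noncomputable def domf (β1 β2 b x : ℝ) : ℝ :=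
  |Real.Gamma (1-β1-β2)| *
    ((2:ℝ)^(1-(β1+β2)) * Real.exp (((|β1|+|β2|+2)*b + b/2)*|x| - x^2/2)
     + (1-β1-β2) * b * ((2:ℝ)^(2-(β1+β2)) *
        (Real.exp (((|β1|+|β2|+2)*b+1)*(b/2) + ((|β1|+|β2|+2)*b+1)^2/2) *
          Real.exp (-|x|))))

lemma Jf_bound (β1 β2 b : ℝ) (hb1 : β1 < 1/2) (hb2 : β2 < 1/2) (hb : 0 < b) {h x : ℝ}
    (hh : h ∈ Set.Ioc 0 b) : ‖Jf β1 β2 h x‖ ≤ domf β1 β2 b x := by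
  have hs1 : (0:ℝ) < 1-β1-β2 := by linarith
  have hT1 : (0:ℝ) ≤ Real.exp (β2*(h*x)) * nPdf (h/2+x) * Cx h x ^ (β1+β2-1) := by
    exact mul_nonneg (mul_nonneg (Real.exp_nonneg _) (nPdf_nonneg _))
      (Real.rpow_nonneg (Cx_pos h x).le _)
  have hT2 : (0:ℝ) ≤ (1-β1-β2) * h * Real.exp ((β2-1)*(h*x)) * nCdf (h/2+x) * nCdf (h/2-x)
      * Cx h x ^ (β1+β2-2) := by
    have := nCdf_nonneg (h/2+x); have := nCdf_nonneg (h/2-x)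
    have := Real.rpow_nonneg (Cx_pos h x).le (β1+β2-2)
    have := hh.1
    positivity
  rw [Jf, Real.norm_eq_abs, abs_mul]
  have habs : |Real.exp (β2*(h*x)) * nPdf (h/2+x) * Cx h x ^ (β1+β2-1)
      + (1-β1-β2) * h * Real.exp ((β2-1)*(h*x)) * nCdf (h/2+x) * nCdf (h/2-x)
        * Cx h x ^ (β1+β2-2)|
      = Real.exp (β2*(h*x)) * nPdf (h/2+x) * Cx h x ^ (β1+β2-1)
      + (1-β1-β2) * h * Real.exp ((β2-1)*(h*x)) * nCdf (h/2+x) * nCdf (h/2-x)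
        * Cx h x ^ (β1+β2-2) := abs_of_nonneg (by linarith)
  rw [habs, domf]
  refine mul_le_mul_of_nonneg_left ?_ (abs_nonneg _)
  exact add_le_add (T1_bound β1 β2 b hb1 hb2 hb hh) (T2_bound β1 β2 b hb1 hb2 hb hh)

lemma integrable_exp_abs_sq (c : ℝ) : Integrable (fun x : ℝ => Real.exp (c*|x| - x^2/2)) := by
  have hg : Integrable (fun x : ℝ => Real.exp (c^2) * Real.exp (-(1/4:ℝ) * x^2)) :=
    (integrable_exp_neg_mul_sq (by norm_num)).const_mul _
  refine hg.mono' ?_ ?_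
  · exact (Real.continuous_exp.comp (((continuous_const.mul continuous_abs)).sub
      ((continuous_pow 2).div_const 2))).aestronglyMeasurable
  · filter_upwards with x
    rw [Real.norm_eq_abs, abs_of_pos (Real.exp_pos _), ← Real.exp_add]
    exact Real.exp_le_exp.2 (by nlinarith [sq_nonneg (|x| - 2*c), sq_abs x])

lemma integrable_exp_neg_abs : Integrable (fun x : ℝ => Real.exp (-|x|)) := by
  have h1 : IntegrableOn (fun x : ℝ => Real.exp (-|x|)) (Set.Ioi 0) := by
    refine ((exp_neg_integrableOn_Ioi 0 one_pos).congr_fun ?_ measurableSet_Ioi)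
    intro x hx
    simp only []
    rw [abs_of_pos (Set.mem_Ioi.1 hx)]
    norm_num
  have h2 : IntegrableOn (fun x : ℝ => Real.exp (-|x|)) (Set.Iic 0) := by
    have : IntegrableOn (fun x : ℝ => Real.exp x) (Set.Iic 0) := integrableOn_exp_Iic 0
    refine this.congr_fun ?_ measurableSet_Iic
    intro x hx
    simp only []
    rw [abs_of_nonpos (Set.mem_Iic.1 hx), neg_neg]
  have := h2.union h1
  rwa [Set.Iic_union_Ioi, integrableOn_univ] at this

lemma integrable_domf (β1 β2 b : ℝ) : Integrable (domf β1 β2 b) := by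
  have h : ∀ x, domf β1 β2 b x =
      (|Real.Gamma (1-β1-β2)| * (2:ℝ)^(1-(β1+β2))) *
        Real.exp (((|β1|+|β2|+2)*b + b/2)*|x| - x^2/2)
      + (|Real.Gamma (1-β1-β2)| * ((1-β1-β2) * b * ((2:ℝ)^(2-(β1+β2)) *
          Real.exp (((|β1|+|β2|+2)*b+1)*(b/2) + ((|β1|+|β2|+2)*b+1)^2/2)))) *
        Real.exp (-|x|) := by
    intro x; unfold domf; ring
  have h2 : Integrable (fun x : ℝ =>
      (|Real.Gamma (1-β1-β2)| * (2:ℝ)^(1-(β1+β2))) *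
        Real.exp (((|β1|+|β2|+2)*b + b/2)*|x| - x^2/2)
      + (|Real.Gamma (1-β1-β2)| * ((1-β1-β2) * b * ((2:ℝ)^(2-(β1+β2)) *
          Real.exp (((|β1|+|β2|+2)*b+1)*(b/2) + ((|β1|+|β2|+2)*b+1)^2/2)))) *
        Real.exp (-|x|)) :=
    ((integrable_exp_abs_sq _).const_mul _).add (integrable_exp_neg_abs.const_mul _)
  exact h2.congr (by filter_upwards with x; rw [h x])

lemma continuous_Jf_x (β1 β2 h : ℝ) : Continuous fun x => Jf β1 β2 h x := by
  have c1 : Continuous fun x : ℝ => h/2 + x := by fun_prop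
  have c2 : Continuous fun x : ℝ => h/2 - x := by fun_prop
  have cCx : Continuous fun x => Cx h x :=
    (continuous_nCdf.comp c1).add
      ((Real.continuous_exp.comp (by fun_prop : Continuous fun x : ℝ => -(h*x))).mul
        (continuous_nCdf.comp c2))
  have cR1 : Continuous fun x => Cx h x ^ (β1+β2-1) :=
    cCx.rpow_const fun x => Or.inl (Cx_pos h x).ne'
  have cR2 : Continuous fun x => Cx h x ^ (β1+β2-2) :=
    cCx.rpow_const fun x => Or.inl (Cx_pos h x).ne'
  have ce1 : Continuous fun x : ℝ => Real.exp (β2*(h*x)) :=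
    Real.continuous_exp.comp (by fun_prop)
  have ce2 : Continuous fun x : ℝ => Real.exp ((β2-1)*(h*x)) :=
    Real.continuous_exp.comp (by fun_prop)
  exact continuous_const.mul
    (((ce1.mul (continuous_nPdf.comp c1)).mul cR1).add
      (((((continuous_const.mul ce2).mul (continuous_nCdf.comp c1)).mul
        (continuous_nCdf.comp c2)).mul cR2)))

lemma continuous_Jf_h (β1 β2 x : ℝ) : Continuous fun h => Jf β1 β2 h x := by
  have c1 : Continuous fun h : ℝ => h/2 + x := by fun_prop
  have c2 : Continuous fun h : ℝ => h/2 - x := by fun_prop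
  have cCx : Continuous fun h => Cx h x :=
    (continuous_nCdf.comp c1).add
      ((Real.continuous_exp.comp (by fun_prop : Continuous fun h : ℝ => -(h*x))).mul
        (continuous_nCdf.comp c2))
  have cR1 : Continuous fun h => Cx h x ^ (β1+β2-1) :=
    cCx.rpow_const fun h => Or.inl (Cx_pos h x).ne'
  have cR2 : Continuous fun h => Cx h x ^ (β1+β2-2) :=
    cCx.rpow_const fun h => Or.inl (Cx_pos h x).ne'
  have ce1 : Continuous fun h : ℝ => Real.exp (β2*(h*x)) :=
    Real.continuous_exp.comp (by fun_prop)
  have ce2 : Continuous fun h : ℝ => Real.exp ((β2-1)*(h*x)) :=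
    Real.continuous_exp.comp (by fun_prop)
  exact continuous_const.mul
    (((ce1.mul (continuous_nPdf.comp c1)).mul cR1).add
      ((((((continuous_const.mul continuous_id).mul ce2).mul (continuous_nCdf.comp c1)).mul
        (continuous_nCdf.comp c2)).mul cR2)))

lemma Jf_zero (β1 β2 x : ℝ) : Jf β1 β2 0 x = Real.Gamma (1-β1-β2) * nPdf x := by
  have hC : Cx 0 x = 1 := by
    rw [Cx]
    norm_num
    exact nCdf_add_neg x
  rw [Jf, hC]
  norm_num [Real.one_rpow]

lemma integral_Jf_zero (β1 β2 : ℝ) : ∫ x, Jf β1 β2 0 x = Real.Gamma (1-β1-β2) := by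
  simp_rw [Jf_zero]
  rw [integral_const_mul, integral_nPdf, mul_one]

lemma tendsto_integral_Jf (β1 β2 : ℝ) (hb1 : β1 < 1/2) (hb2 : β2 < 1/2)
    {l : Filter ℝ} [l.IsCountablyGenerated] {b h₀ : ℝ} (hb : 0 < b)
    (hev : ∀ᶠ h in l, h ∈ Set.Ioc 0 b) (hlim : Filter.Tendsto id l (nhds h₀)) :
    Filter.Tendsto (fun h => ∫ x, Jf β1 β2 h x) l (nhds (∫ x, Jf β1 β2 h₀ x)) := by
  apply tendsto_integral_filter_of_dominated_convergence (domf β1 β2 b)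
  · exact Filter.Eventually.of_forall fun h => (continuous_Jf_x β1 β2 h).aestronglyMeasurable
  · filter_upwards [hev] with h hh
    exact Filter.Eventually.of_forall fun x => Jf_bound β1 β2 b hb1 hb2 hb hh
  · exact integrable_domf β1 β2 b
  · exact Filter.Eventually.of_forall fun x =>
      ((continuous_Jf_h β1 β2 x).tendsto h₀).comp hlim

lemma gs_tendsto (β1 β2 : ℝ) (hb1 : β1 < 1/2) (hb2 : β2 < 1/2) :
    Filter.Tendsto (gs β1 β2) (nhdsWithin 0 (Set.Ioi 0))
      (nhds (Real.Gamma (1-β1-β2))) := by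
  have hs : β1 + β2 ≠ 1 := by intro hc; linarith
  have hev : ∀ᶠ h in nhdsWithin 0 (Set.Ioi 0), h ∈ Set.Ioc (0:ℝ) 1 :=
    Ioc_mem_nhdsGT_of_mem ⟨le_refl 0, one_pos⟩
  have h1 := tendsto_integral_Jf β1 β2 hb1 hb2 one_pos hev
    (Filter.tendsto_id.mono_left nhdsWithin_le_nhds)
  rw [integral_Jf_zero] at h1
  refine h1.congr' ?_
  filter_upwards [self_mem_nhdsWithin] with h hh
  exact (gs_eq β1 β2 hs (Set.mem_Ioi.1 hh)).symm

lemma gs_continuousOn (β1 β2 : ℝ) (hb1 : β1 < 1/2) (hb2 : β2 < 1/2) :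
    ContinuousOn (gs β1 β2) (Set.Ici 0) := by
  have hs : β1 + β2 ≠ 1 := by intro hc; linarith
  intro h₀ hh₀
  rcases eq_or_lt_of_le (Set.mem_Ici.1 hh₀) with he | hlt
  · subst he
    have hgs0 : gs β1 β2 0 = Real.Gamma (1-β1-β2) := by rw [gs, if_pos rfl]
    unfold ContinuousWithinAt
    rw [← Set.Ioi_insert, nhdsWithin_insert, Filter.tendsto_sup, hgs0]
    exact ⟨hgs0 ▸ tendsto_pure_nhds (gs β1 β2) 0, gs_tendsto β1 β2 hb1 hb2⟩
  · refine ContinuousAt.continuousWithinAt ?_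
    have hev : ∀ᶠ h in nhds h₀, h ∈ Set.Ioc (0:ℝ) (h₀+1) := by
      filter_upwards [Ioo_mem_nhds hlt (by linarith : h₀ < h₀+1)] with h hh
      exact ⟨hh.1, hh.2.le⟩
    have h1 := tendsto_integral_Jf β1 β2 hb1 hb2 (b := h₀+1) (by linarith) hev Filter.tendsto_id
    rw [← gs_eq β1 β2 hs hlt] at h1
    refine h1.congr' ?_
    filter_upwards [hev] with h hh
    exact (gs_eq β1 β2 hs hh.1).symm

lemma coef_lt {ξ : ℝ} (hξ : ξ ≠ 0) {β : ℕ} (hβξ : (β : ℝ) * ξ < 1 / 2) {k : ℕ} (hk : k ≤ β) :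
    ((β : ℝ) - k) * ξ < 1 / 2 := by
  have hk' : (k : ℝ) ≤ (β : ℝ) := Nat.cast_le.2 hk
  have h0 : (0:ℝ) ≤ (β : ℝ) - k := by linarith
  rcases lt_or_gt_of_ne hξ with hneg | hpos
  · nlinarith [mul_nonneg h0 (neg_pos.2 hneg).le]
  · nlinarith [mul_nonneg (Nat.cast_nonneg k : (0:ℝ) ≤ (k:ℝ)) hpos.le]


/-- `g_{β,η,τ,ξ}(h) → Σ Σ B_{k1,k2} Γ(1 - ξ(2β - k1 - k2))` as `h → 0+`, this limit equals
`g_{β,η,τ,ξ}(0)`, and `g_{β,η,τ,ξ}` is continuous on `[0,∞)`. -/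
theorem stmt8 (η τ ξ : ℝ) (hτ : 0 < τ) (hξ : ξ ≠ 0)
    (β : ℕ) (hβ : 0 < β) (hβξ : (β : ℝ) * ξ < 1 / 2) :
    Filter.Tendsto (gfull β η τ ξ) (nhdsWithin 0 (Set.Ioi 0))
      (nhds (∑ k1 ∈ Finset.range (β + 1), ∑ k2 ∈ Finset.range (β + 1),
        Bcoef β k1 k2 η τ ξ * Real.Gamma (1 - ξ * (2 * (β : ℝ) - k1 - k2)))) ∧
    (∑ k1 ∈ Finset.range (β + 1), ∑ k2 ∈ Finset.range (β + 1),
        Bcoef β k1 k2 η τ ξ * Real.Gamma (1 - ξ * (2 * (β : ℝ) - k1 - k2)))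
      = gfull β η τ ξ 0 ∧
    ContinuousOn (gfull β η τ ξ) (Set.Ici 0) := by
  have hmem : ∀ k : ℕ, k ∈ Finset.range (β + 1) → ((β : ℝ) - k) * ξ < 1/2 := fun k hk =>
    coef_lt hξ hβξ (Nat.lt_succ_iff.1 (Finset.mem_range.1 hk))
  refine ⟨?_, ?_, ?_⟩
  · have : Filter.Tendsto (fun h => ∑ k1 ∈ Finset.range (β + 1), ∑ k2 ∈ Finset.range (β + 1),
        Bcoef β k1 k2 η τ ξ * gs (((β : ℝ) - k1) * ξ) (((β : ℝ) - k2) * ξ) h)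
        (nhdsWithin 0 (Set.Ioi 0))
        (nhds (∑ k1 ∈ Finset.range (β + 1), ∑ k2 ∈ Finset.range (β + 1),
          Bcoef β k1 k2 η τ ξ * Real.Gamma (1 - ξ * (2 * (β : ℝ) - k1 - k2)))) := by
      refine tendsto_finset_sum _ fun k1 hk1 => tendsto_finset_sum _ fun k2 hk2 => ?_
      have h1 := gs_tendsto (((β : ℝ) - k1) * ξ) (((β : ℝ) - k2) * ξ)
        (hmem k1 hk1) (hmem k2 hk2)
      rw [show (1:ℝ) - ((β : ℝ) - k1) * ξ - ((β : ℝ) - k2) * ξ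
          = 1 - ξ * (2 * (β : ℝ) - k1 - k2) by ring] at h1
      exact h1.const_mul _
    exact this
  · refine Finset.sum_congr rfl fun k1 _ => Finset.sum_congr rfl fun k2 _ => ?_
    rw [gs, if_pos rfl, show (1:ℝ) - ξ * (2 * (β : ℝ) - k1 - k2)
      = 1 - ((β : ℝ) - k1) * ξ - ((β : ℝ) - k2) * ξ by ring]
  · refine continuousOn_finset_sum _ fun k1 hk1 => continuousOn_finset_sum _ fun k2 hk2 => ?_
    exact continuousOn_const.mul (gs_continuousOn _ _ (hmem k1 hk1) (hmem k2 hk2))
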